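/- arXiv:1011.4134 — 2 statements merged into one kernel-verified Lean document; each statement's English description precedes it below -/
import Mathlib

section
/- Let P be a κ × κ × κ tensor of the form P(i,u,v) = Σ_{s=1}^κ π_s a_s(i) b_s(u) c_s(v) for vectors a_s, b_s, c_s ∈ ℝ^κ and scalars π_s (i.e., P has a rank-κ decomposition). Then for all indices i, j, k, the matrix slices P_(i) with (u,v)-entry P(i,u,v) satisfy P_(i) · adj(P_(j)) · P_(k) = P_(k) · adj(P_(j)) · P_(i). -/
/-- Let `P` be a `κ × κ × κ` tensor with a rank-`κ` decomposition
`P(i,u,v) = Σ_s π_s a_s(i) b_s(u) c_s(v)`.  Then the matrix slices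
`P_(i) = (P(i,u,v))_{u,v}` satisfy
`P_(i) · adj(P_(j)) · P_(k) = P_(k) · adj(P_(j)) · P_(i)` for all `i, j, k`. -/
theorem stmt_7 {κ : ℕ} (P : Fin κ → Fin κ → Fin κ → ℝ)
    (π : Fin κ → ℝ) (a b c : Fin κ → Fin κ → ℝ)
    (hP : ∀ i u v, P i u v = ∑ s, π s * a s i * b s u * c s v)
    (i j k : Fin κ) :
    (Matrix.of (P i)) * (Matrix.of (P j)).adjugate * (Matrix.of (P k)) =
      (Matrix.of (P k)) * (Matrix.of (P j)).adjugate * (Matrix.of (P i)) := by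
  set M := (Matrix.of fun u s => b s u : Matrix (Fin κ) (Fin κ) ℝ) with hMdef
  set N := (Matrix.of fun s v => c s v : Matrix (Fin κ) (Fin κ) ℝ) with hNdef
  set D := fun x => Matrix.diagonal (fun s => π s * a s x) with hDdef
  have key : ∀ x, Matrix.of (P x) = M * D x * N := by
    intro x
    ext u v
    rw [Matrix.mul_assoc]
    simp only [Matrix.of_apply, hP, Matrix.mul_apply, hMdef, hNdef, hDdef,
      Matrix.diagonal_mul, Matrix.diagonal_apply, ite_mul, zero_mul, Finset.sum_ite_eq,
      Finset.mem_univ, if_true]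
    apply Finset.sum_congr rfl
    intros s _
    ring
  have hadj : (Matrix.of (P j)).adjugate = N.adjugate * (D j).adjugate * M.adjugate := by
    rw [key j, Matrix.adjugate_mul_distrib, Matrix.adjugate_mul_distrib, Matrix.mul_assoc]
  have hN : N * N.adjugate = N.det • 1 := Matrix.mul_adjugate N
  have hM : M.adjugate * M = M.det • 1 := Matrix.adjugate_mul M
  have main : ∀ x z, M * D x * N * (N.adjugate * (D j).adjugate * M.adjugate) * (M * D z * N)
      = M.det • N.det • (M * (D x * (D j).adjugate * D z) * N) := by
    intro x z
    calc M * D x * N * (N.adjugate * (D j).adjugate * M.adjugate) * (M * D z * N)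
        = (M * D x) * (N * N.adjugate) * (D j).adjugate * (M.adjugate * M) * (D z * N) := by
          simp only [Matrix.mul_assoc]
      _ = M.det • N.det • (M * (D x * (D j).adjugate * D z) * N) := by
          rw [hN, hM]
          simp only [Matrix.mul_smul, Matrix.smul_mul, Matrix.mul_one, Matrix.one_mul,
            Matrix.mul_assoc]
  have hD : D i * (D j).adjugate * D k = D k * (D j).adjugate * D i := by
    simp only [hDdef, Matrix.adjugate_diagonal, Matrix.diagonal_mul_diagonal]
    apply congrArg Matrix.diagonal
    funext s
    ring
  rw [key i, key k, hadj, main i k, main k i, hD]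
end

section
/- Let f_1, …, f_t : ℝ^d → ℝ be polynomials such that every subset of them of size min(s,t) is linearly independent (e.g., monomials x^{α_1}, …, x^{α_t} with distinct exponents α_j). Then for generic choices of points u_1, …, u_s ∈ ℝ^d (i.e., outside a proper algebraic subset), the s × t matrix with entries f_j(u_i) has full Kruskal row rank min(s,t): every min(s,t) of its rows are linearly independent. -/
open MvPolynomial Module

/-- Rows of a square matrix with nonzero determinant are linearly independent. -/
lemma rowsLI {m : ℕ} (A : Matrix (Fin m) (Fin m) ℝ) (h : A.det ≠ 0) :
    LinearIndependent ℝ (fun i => A i) := by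
  rw [Fintype.linearIndependent_iff]
  intro w hw
  by_contra hne
  push_neg at hne
  obtain ⟨i, hi⟩ := hne
  apply h
  rw [← Matrix.exists_vecMul_eq_zero_iff]
  refine ⟨w, fun h0 => hi (congrFun h0 i), ?_⟩
  funext j
  have := congrFun hw j
  simpa [Matrix.vecMul, dotProduct, Finset.sum_apply] using this

/-- For a linearly independent family of functions, there are evaluation points making
the evaluation matrix nonsingular. -/
lemma keyLem {m : ℕ} {α : Type*} (F : Fin m → (α → ℝ))
    (hF : LinearIndependent ℝ F) :
    ∃ x : Fin m → α, (Matrix.of fun i j : Fin m => F j (x i)).det ≠ 0 := by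
  classical
  set φ : α → Module.Dual ℝ (Fin m → ℝ) :=
    fun a => ∑ j, F j a • LinearMap.proj j with hφdef
  have hφapp : ∀ a c, φ a c = ∑ j, F j a * c j := by
    intro a c
    simp [hφdef, LinearMap.sum_apply]
  have hspan : Submodule.span ℝ (Set.range φ) = ⊤ := by
    apply Submodule.span_eq_top_of_ne_zero
    intro z hz
    by_contra h
    push_neg at h
    have hz0 : ∀ j, z j = 0 := by
      apply Fintype.linearIndependent_iff.mp hF
      funext a
      have := h (φ a) (Set.mem_range_self a)
      rw [hφapp] at this
      simpa [Finset.sum_apply, mul_comm] using this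
    exact hz (funext hz0)
  obtain ⟨b, hbsub, hbspan, hbli⟩ := exists_linearIndependent ℝ (Set.range φ)
  rw [hspan] at hbspan
  let B : Basis b ℝ (Module.Dual ℝ (Fin m → ℝ)) :=
    Basis.mk hbli (by rw [Subtype.range_coe, hbspan])
  have : Fintype b := FiniteDimensional.fintypeBasisIndex B
  have hcard : Fintype.card b = m := by
    have h1 := Module.finrank_eq_card_basis B
    rw [Subspace.dual_finrank_eq, Module.finrank_fin_fun] at h1
    omega
  let e : Fin m ≃ b := (Fintype.equivFinOfCardEq hcard).symm
  have hxex : ∀ i : Fin m, ∃ a : α, φ a = (e i : Module.Dual ℝ (Fin m → ℝ)) :=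
    fun i => hbsub (e i).2
  choose x hx using hxex
  have hli : LinearIndependent ℝ (fun i : Fin m => (e i : Module.Dual ℝ (Fin m → ℝ))) := by
    have := hbli.comp e e.injective
    exact this
  refine ⟨x, fun hdet => ?_⟩
  obtain ⟨v, hv0, hvM⟩ := Matrix.exists_vecMul_eq_zero_iff.mpr hdet
  have hsum : ∑ i, v i • (e i : Module.Dual ℝ (Fin m → ℝ)) = 0 := by
    refine LinearMap.ext fun c => ?_
    have expand : ∀ i, ((e i : Module.Dual ℝ (Fin m → ℝ)) : (Fin m → ℝ) →ₗ[ℝ] ℝ) c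
        = ∑ j, F j (x i) * c j := by
      intro i
      rw [← hx i, hφapp]
    simp only [LinearMap.coe_sum, Finset.sum_apply, LinearMap.smul_apply, smul_eq_mul,
      LinearMap.zero_apply]
    calc ∑ i, v i * ((e i : Module.Dual ℝ (Fin m → ℝ)) c)
        = ∑ i, v i * ∑ j, F j (x i) * c j := by
          refine Finset.sum_congr rfl fun i _ => ?_; rw [expand i]
      _ = ∑ j, (∑ i, v i * F j (x i)) * c j := by
          simp only [Finset.mul_sum, Finset.sum_mul, mul_assoc]
          rw [Finset.sum_comm]
      _ = 0 := by
          refine Finset.sum_eq_zero fun j _ => ?_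
          have h0 : ∑ i, v i * F j (x i) = 0 := by
            have := congrFun hvM j
            simpa [Matrix.vecMul, dotProduct] using this
          rw [h0, zero_mul]
  have := Fintype.linearIndependent_iff.mp hli v hsum
  exact hv0 (funext this)

/-- Let `f_1, …, f_t : ℝ^d → ℝ` be polynomials such that every subset of them of size
`min(s,t)` is linearly independent (as polynomial functions).  Then for generic points
`u_1, …, u_s ∈ ℝ^d` — i.e., outside the zero set of some nonzero polynomial `g` on
`(ℝ^d)^s` — the `s × t` matrix with entries `f_j(u_i)` has full Kruskal row rank
`min(s,t)`: every `min(s,t)` of its rows are linearly independent. -/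
theorem stmt_11 {d s t : ℕ} (f : Fin t → MvPolynomial (Fin d) ℝ)
    (hf : ∀ S : Finset (Fin t), S.card = min s t →
      LinearIndependent ℝ
        (fun j : S => fun x : Fin d → ℝ => MvPolynomial.eval x (f j))) :
    ∃ g : MvPolynomial (Fin s × Fin d) ℝ, g ≠ 0 ∧
      ∀ u : Fin s → Fin d → ℝ,
        MvPolynomial.eval (fun p : Fin s × Fin d => u p.1 p.2) g ≠ 0 →
        ∀ R : Finset (Fin s), R.card = min s t →
          LinearIndependent ℝ
            (fun i : R => fun j : Fin t => MvPolynomial.eval (u i) (f j)) := by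
  classical
  set m := min s t with hm
  obtain ⟨S, -, hScard⟩ := Finset.exists_subset_card_eq
    (s := (Finset.univ : Finset (Fin t))) (n := m) (by simp [hm, min_le_right])
  set c : Fin m → Fin t := fun k => (S.orderIsoOfFin hScard k : Fin t) with hc
  have hFli : LinearIndependent ℝ
      (fun k : Fin m => fun x : Fin d → ℝ => MvPolynomial.eval x (f (c k))) :=
    (linearIndependent_equiv (S.orderIsoOfFin hScard).toEquiv).mpr (hf S hScard)
  set P : Finset (Fin s) → MvPolynomial (Fin s × Fin d) ℝ := fun R =>
    if hR : R.card = m then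
      Matrix.det (Matrix.of fun i j : Fin m =>
        MvPolynomial.rename (Prod.mk ((R.orderIsoOfFin hR i : Fin s))) (f (c j)))
    else 1 with hP
  have hPeval : ∀ (R : Finset (Fin s)) (hR : R.card = m) (u : Fin s → Fin d → ℝ),
      MvPolynomial.eval (fun p : Fin s × Fin d => u p.1 p.2) (P R) =
      Matrix.det (Matrix.of fun i j : Fin m =>
        MvPolynomial.eval (u ((R.orderIsoOfFin hR i : Fin s))) (f (c j))) := by
    intro R hR u
    rw [hP]
    simp only [dif_pos hR]
    rw [RingHom.map_det]
    congr 1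
    ext i j
    simp [MvPolynomial.eval_rename_prod_mk]
  have hPne : ∀ (R : Finset (Fin s)), R.card = m → P R ≠ 0 := by
    intro R hR
    obtain ⟨x, hx⟩ := keyLem _ hFli
    have hrinj : Function.Injective (fun i : Fin m => ((R.orderIsoOfFin hR i : Fin s))) :=
      fun a b hab => (R.orderIsoOfFin hR).injective (Subtype.ext hab)
    set u : Fin s → Fin d → ℝ :=
      fun i => if h : ∃ k, ((R.orderIsoOfFin hR k : Fin s)) = i then x h.choose else 0 with hu
    have hur : ∀ k, u ((R.orderIsoOfFin hR k : Fin s)) = x k := by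
      intro k
      have hex : ∃ k', ((R.orderIsoOfFin hR k' : Fin s)) = (R.orderIsoOfFin hR k : Fin s) :=
        ⟨k, rfl⟩
      rw [hu]
      simp only [dif_pos hex]
      rw [hrinj hex.choose_spec]
    intro hP0
    have h1 := hPeval R hR u
    rw [hP0, map_zero] at h1
    apply hx
    show (Matrix.of fun i j : Fin m =>
      MvPolynomial.eval (x i) (f (c j))).det = 0
    have hmat : (Matrix.of fun i j : Fin m =>
        MvPolynomial.eval (x i) (f (c j)))
        = Matrix.of fun i j : Fin m =>
          MvPolynomial.eval (u ((R.orderIsoOfFin hR i : Fin s))) (f (c j)) := by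
      ext i j
      rw [Matrix.of_apply, Matrix.of_apply, hur]
    rw [hmat]
    exact h1.symm
  refine ⟨∏ R ∈ Finset.univ.filter (fun R : Finset (Fin s) => R.card = m), P R, ?_, ?_⟩
  · rw [Finset.prod_ne_zero_iff]
    intro R hR
    exact hPne R (Finset.mem_filter.mp hR).2
  · intro u hg R hR
    have hPu : MvPolynomial.eval (fun p : Fin s × Fin d => u p.1 p.2) (P R) ≠ 0 := by
      intro h0
      apply hg
      rw [map_prod]
      exact Finset.prod_eq_zero (Finset.mem_filter.mpr ⟨Finset.mem_univ R, hR⟩) h0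
    rw [hPeval R hR u] at hPu
    have hrows := rowsLI _ hPu
    rw [← linearIndependent_equiv (R.orderIsoOfFin hR).toEquiv]
    have hcomp : LinearIndependent ℝ
        ((LinearMap.funLeft ℝ ℝ c) ∘
          (fun k : Fin m => fun j : Fin t =>
            MvPolynomial.eval (u ((R.orderIsoOfFin hR k : Fin s))) (f j))) := by
      convert hrows using 1
      rfl
    exact hcomp.of_comp (LinearMap.funLeft ℝ ℝ c)
end
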